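/- Let 2μ ≤ β ≤ α be positive reals and let n be a positive integer with μn, βn, αn integers. Let G be a graph on αn vertices such that between any two disjoint sets of μn vertices there is at least one edge. Then between any two disjoint sets of βn vertices there are at least (β²/(2μ))·n edges. -/

import Mathlib

open Finset

section Aux

variable {V : Type*} [Fintype V] [DecidableEq V] (G : SimpleGraph V) [DecidableRel G.Adj]

/-- degree of `y` into `X` -/
private def dX (X : Finset V) (y : V) : ℕ := (X.filter fun x => G.Adj x y).card

private lemma card_interedges_eq_sum (X Y : Finset V) :
    (Rel.interedges G.Adj X Y).card = ∑ y ∈ Y, dX G X y := by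
  classical
  have h : Rel.interedges G.Adj X Y = (X ×ˢ Y).filter (fun e => G.Adj e.1 e.2) := rfl
  rw [h, Finset.card_filter, Finset.sum_product_right]
  refine Finset.sum_congr rfl fun y _ => ?_
  rw [dX, Finset.card_filter]

variable {G}

private lemma L0 {mn : ℕ}
    (hyp : ∀ X Y : Finset V, Disjoint X Y → X.card = mn → Y.card = mn →
      0 < (Rel.interedges G.Adj X Y).card)
    {X T : Finset V} (hd : Disjoint X T) (hT : T.card = mn) :
    X.card + 1 ≤ (∑ y ∈ T, dX G X y) + mn := by
  classical
  set U := X.filter fun x => ∀ y ∈ T, ¬ G.Adj x y with hU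
  have hUlt : U.card < mn := by
    by_contra h
    push_neg at h
    obtain ⟨U', hU'sub, hU'card⟩ := Finset.exists_subset_card_eq h
    have hdisj : Disjoint U' T :=
      hd.mono_left (hU'sub.trans (Finset.filter_subset _ _))
    have hpos := hyp U' T hdisj hU'card hT
    obtain ⟨⟨u, t⟩, hmem⟩ := Finset.card_pos.mp hpos
    rw [Rel.mem_interedges_iff] at hmem
    have := hU'sub hmem.1
    rw [hU, Finset.mem_filter] at this
    exact this.2 t hmem.2.1 hmem.2.2
  set W := X.filter fun x => ∃ y ∈ T, G.Adj x y with hW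
  have hWcard : W.card ≤ ∑ y ∈ T, dX G X y := by
    have hsub : W ⊆ T.biUnion fun y => X.filter fun x => G.Adj x y := by
      intro x hx
      rw [hW, Finset.mem_filter] at hx
      obtain ⟨hxX, y, hyT, hadj⟩ := hx
      exact Finset.mem_biUnion.mpr ⟨y, hyT, Finset.mem_filter.mpr ⟨hxX, hadj⟩⟩
    calc W.card ≤ (T.biUnion fun y => X.filter fun x => G.Adj x y).card :=
          Finset.card_le_card hsub
      _ ≤ ∑ y ∈ T, dX G X y := Finset.card_biUnion_le
  have hXsplit : W.card + U.card = X.card := by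
    rw [hW, hU]
    have := Finset.card_filter_add_card_filter_not
      (s := X) (p := fun x => ∃ y ∈ T, G.Adj x y)
    simpa using this
  omega

private lemma L1 {mn : ℕ}
    (hyp : ∀ X Y : Finset V, Disjoint X Y → X.card = mn → Y.card = mn →
      0 < (Rel.interedges G.Adj X Y).card)
    (hmn : 0 < mn) {X Y : Finset V} (hd : Disjoint X Y) (hY : mn ≤ Y.card) :
    ∃ y ∈ Y, X.card + 1 ≤ mn * dX G X y + mn := by
  classical
  obtain ⟨T, hTsub, hTcard⟩ := Finset.exists_subset_card_eq hY
  have hTne : T.Nonempty := Finset.card_pos.mp (hTcard ▸ hmn)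
  obtain ⟨y, hyT, hymax⟩ := Finset.exists_max_image T (dX G X) hTne
  refine ⟨y, hTsub hyT, ?_⟩
  have h0 := L0 hyp (hd.mono_right hTsub) hTcard
  have hsum : ∑ z ∈ T, dX G X z ≤ mn * dX G X y := by
    calc ∑ z ∈ T, dX G X z ≤ ∑ _z ∈ T, dX G X y :=
          Finset.sum_le_sum fun z hz => hymax z hz
      _ = mn * dX G X y := by rw [Finset.sum_const, hTcard, smul_eq_mul]
  omega

private lemma L2 {mn : ℕ}
    (hyp : ∀ X Y : Finset V, Disjoint X Y → X.card = mn → Y.card = mn →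
      0 < (Rel.interedges G.Adj X Y).card)
    (hmn : 0 < mn) (X : Finset V) :
    ∀ k (Y : Finset V), Y.card = k → mn ≤ k → Disjoint X Y →
      k * (X.card + 1) ≤ mn * (∑ y ∈ Y, dX G X y) + k * mn := by
  classical
  intro k
  induction k using Nat.strong_induction_on with
  | _ k ih =>
    intro Y hYk hmk hd
    rcases eq_or_lt_of_le hmk with heq | hlt
    · -- k = mn
      have h0 := L0 hyp hd (by omega : Y.card = mn)
      subst heq
      nlinarith [h0]
    · -- k > mn
      obtain ⟨j, rfl⟩ : ∃ j, k = j + 1 := ⟨k - 1, by omega⟩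
      obtain ⟨y, hyY, hy⟩ := L1 hyp hmn hd (by omega : mn ≤ Y.card)
      set Y' := Y.erase y with hY'
      have hY'card : Y'.card = j := by rw [hY', Finset.card_erase_of_mem hyY, hYk]; omega
      have hstep := ih j (by omega) Y' hY'card (by omega)
        (hd.mono_right (Finset.erase_subset _ _))
      have hsum : ∑ z ∈ Y, dX G X z = dX G X y + ∑ z ∈ Y', dX G X z := by
        rw [hY', Finset.add_sum_erase _ _ hyY]
      rw [hsum]
      calc (j + 1) * (X.card + 1) = j * (X.card + 1) + (X.card + 1) := by ring
        _ ≤ (mn * (∑ z ∈ Y', dX G X z) + j * mn) + (mn * dX G X y + mn) :=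
            Nat.add_le_add hstep hy
        _ = mn * (dX G X y + ∑ z ∈ Y', dX G X z) + (j + 1) * mn := by ring

end Aux

/-- If `G` on `αn` vertices has an edge between any two disjoint
sets of `μn` vertices, then between any two disjoint sets of `βn` vertices there
are at least `(β²/(2μ))·n` edges (here `2μ ≤ β ≤ α`). -/
theorem stmt1 {V : Type*} [Fintype V] [DecidableEq V] (G : SimpleGraph V)
    [DecidableRel G.Adj] (μ β α : ℝ) (n : ℕ) (hn : 0 < n)
    (hμ : 0 < μ) (hμβ : 2 * μ ≤ β) (hβα : β ≤ α)
    (mn bn an : ℕ) (hmn : (mn : ℝ) = μ * n) (hbn : (bn : ℝ) = β * n)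
    (han : (an : ℝ) = α * n) (hV : Fintype.card V = an)
    (hyp : ∀ X Y : Finset V, Disjoint X Y → X.card = mn → Y.card = mn →
      0 < (Rel.interedges G.Adj X Y).card) :
    ∀ X Y : Finset V, Disjoint X Y → X.card = bn → Y.card = bn →
      β ^ 2 / (2 * μ) * n ≤ ((Rel.interedges G.Adj X Y).card : ℝ) := by
  intro X Y hd hX hY
  have hn' : (0:ℝ) < n := by exact_mod_cast hn
  have hmnpos : 0 < mn := by
    have h : (0:ℝ) < mn := by rw [hmn]; positivity
    exact_mod_cast h
  have h2mb : 2 * mn ≤ bn := by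
    have : (2 * mn : ℝ) ≤ bn := by rw [hmn, hbn]; nlinarith
    exact_mod_cast this
  have hmb : mn ≤ bn := by omega
  have hkey := L2 hyp hmnpos X bn Y hY (by omega : mn ≤ bn)
    hd
  rw [hX] at hkey
  rw [card_interedges_eq_sum]
  -- Cast to reals
  set S := ((∑ y ∈ Y, dX G X y : ℕ) : ℝ) with hS
  have hkeyR : (bn : ℝ) * (bn + 1) ≤ mn * S + bn * mn := by
    rw [hS]; exact_mod_cast hkey
  have hmnR : (0:ℝ) < mn := by exact_mod_cast hmnpos
  have hbnR : (0:ℝ) ≤ bn := by positivity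
  have h2mbR : 2 * (mn:ℝ) ≤ bn := by exact_mod_cast h2mb
  -- target: β^2/(2μ)*n ≤ Σ
  have htarget : β ^ 2 / (2 * μ) * n = (bn:ℝ)^2 / (2 * mn) := by
    rw [hmn, hbn]
    field_simp
  rw [htarget]
  rw [div_le_iff₀ (by positivity)]
  nlinarith [hkeyR, h2mbR, hmnR, hbnR,
    mul_nonneg hbnR (by linarith : (0:ℝ) ≤ (bn:ℝ) - 2 * mn)]
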